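/- arXiv:2007.09857 — 3 statements merged into one kernel-verified Lean document; each statement's English description precedes it below -/
import Mathlib

section
/- For every commutative ring R, the coequalizer in the category of commutative rings of the two evaluation homomorphisms ev₀, ev₁ : R[X] → R (sending a polynomial f to f(0) and to f(1) respectively) is the zero ring; that is, the underlying type of this coequalizer is a subsingleton. -/
open CategoryTheory Limits Polynomial

/-- The coequalizer, in the category of commutative rings, of the two evaluation
homomorphisms `ev₀, ev₁ : R[X] → R` (evaluation of a polynomial at `0` and at `1`)
is the zero ring. -/
theorem coequalizer_aeval_zero_one_subsingleton (R : Type) [CommRing R] :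
    Subsingleton
      (coequalizer
        (CommRingCat.ofHom ((Polynomial.aeval (0 : R)).toRingHom : Polynomial R →+* R))
        (CommRingCat.ofHom ((Polynomial.aeval (1 : R)).toRingHom : Polynomial R →+* R)) :
        CommRingCat) := by
  set f := CommRingCat.ofHom ((Polynomial.aeval (0 : R)).toRingHom : Polynomial R →+* R)
  set g := CommRingCat.ofHom ((Polynomial.aeval (1 : R)).toRingHom : Polynomial R →+* R)
  have h := coequalizer.condition f g
  have h2 : coequalizer.π f g (f (Polynomial.X : Polynomial R))
      = coequalizer.π f g (g (Polynomial.X : Polynomial R)) :=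
    congrArg (fun φ => φ (Polynomial.X : Polynomial R)) h
  have h0 : f (Polynomial.X : Polynomial R) = 0 := by simp [f]
  have h1 : g (Polynomial.X : Polynomial R) = 1 := by simp [g]
  rw [h0, h1, map_zero, map_one] at h2
  exact subsingleton_of_zero_eq_one h2
end

section
/- Let k be a field of characteristic p > 0. The set A = {f ∈ k[X] : D f = 0}, where D : k[X] → Ω¹_{k[X]/k} is the universal derivation, is a k-subalgebra of k[X], and the coequalizer in the category of commutative rings of the two homomorphisms A → k obtained by restricting evaluation at 0 and evaluation at 1 to A is the zero ring. -/
open CategoryTheory Limits Polynomial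

/-- Let `k` be a field of characteristic `p > 0`.  The set
`{f ∈ k[X] : D f = 0}`, where `D` is the universal derivation into the Kähler
differentials of `k[X]` over `k`, is a `k`-subalgebra `A` of `k[X]`, and the coequalizer
in the category of commutative rings of the two homomorphisms `A → k` obtained by
restricting evaluation at `0` and evaluation at `1` to `A` is the zero ring. -/
theorem ker_D_subalgebra_coequalizer_subsingleton
    (k : Type) [Field k] (p : ℕ) (hp : 0 < p) [CharP k p] :
    ∃ A : Subalgebra k (Polynomial k),
      (A : Set (Polynomial k)) = {f | KaehlerDifferential.D k (Polynomial k) f = 0} ∧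
      Subsingleton
        (coequalizer
          (CommRingCat.ofHom
            (((Polynomial.aeval (0 : k)).comp A.val).toRingHom : A →+* k))
          (CommRingCat.ofHom
            (((Polynomial.aeval (1 : k)).comp A.val).toRingHom : A →+* k)) :
          CommRingCat) := by
  set D := KaehlerDifferential.D k (Polynomial k) with hD
  set A : Subalgebra k (Polynomial k) :=
    { carrier := {f | D f = 0}
      mul_mem' := fun {a b} ha hb => by
        simp only [Set.mem_setOf_eq] at *
        rw [Derivation.leibniz, ha, hb, smul_zero, smul_zero, add_zero]
      add_mem' := fun {a b} ha hb => by
        simp only [Set.mem_setOf_eq] at *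
        rw [map_add, ha, hb, add_zero]
      algebraMap_mem' := fun r => by
        simp only [Set.mem_setOf_eq, Derivation.map_algebraMap] } with hA
  refine ⟨A, rfl, ?_⟩
  have hXp : (X : Polynomial k) ^ p ∈ A := by
    show D (X ^ p) = 0
    rw [Derivation.leibniz_pow]
    have : (p : Polynomial k) • ((X : Polynomial k) ^ (p - 1) • D X) = 0 := by
      rw [CharP.cast_eq_zero (Polynomial k) p, zero_smul]
    rwa [Nat.cast_smul_eq_nsmul] at this
  set f := CommRingCat.ofHom (((Polynomial.aeval (0 : k)).comp A.val).toRingHom : A →+* k)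
  set g := CommRingCat.ofHom (((Polynomial.aeval (1 : k)).comp A.val).toRingHom : A →+* k)
  have h := coequalizer.condition f g
  have h2 := ConcreteCategory.congr_hom h (⟨X ^ p, hXp⟩ : A)
  have e0 : f (⟨X ^ p, hXp⟩ : A) = 0 := by
    have : (Polynomial.aeval (0 : k)) ((X : Polynomial k) ^ p) = 0 := by
      simp [zero_pow hp.ne']
    exact this
  have e1 : g (⟨X ^ p, hXp⟩ : A) = 1 := by
    have : (Polynomial.aeval (1 : k)) ((X : Polynomial k) ^ p) = 1 := by simp
    exact this
  have h3 : (coequalizer.π f g) (f (⟨X ^ p, hXp⟩ : A)) =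
      (coequalizer.π f g) (g (⟨X ^ p, hXp⟩ : A)) := h2
  rw [e0, e1, map_zero, map_one] at h3
  exact subsingleton_of_zero_eq_one h3
end

section
/- Let R be a commutative ring and let X be a simplicial object in the category of commutative rings such that the object of X in simplicial degree 0 is R, the object in simplicial degree 1 is the polynomial ring R[X], and the two face maps X₁ → X₀ are the evaluation homomorphisms ev₀ and ev₁ (evaluation at 0 and at 1). Then the colimit of X over Δᵒᵖ is the zero ring (its underlying type is a subsingleton). -/
open CategoryTheory Limits Simplicial Polynomial

/-- Let `X` be a simplicial commutative ring whose ring of `0`-simplices is `R`, whose ring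
of `1`-simplices is the polynomial ring `R[X]`, and whose two face maps `X₁ → X₀` are the
evaluation homomorphisms at `0` and at `1`.  Then the colimit of `X` over `Δᵒᵖ` is the
zero ring. -/
theorem colimit_simplicial_ring_eval_zero_one_subsingleton
    (R : Type) [CommRing R] (X : CategoryTheory.SimplicialObject CommRingCat)
    (h0 : X _⦋0⦌ = CommRingCat.of R)
    (h1 : X _⦋1⦌ = CommRingCat.of (Polynomial R))
    (hd0 : X.δ (0 : Fin 2) =
      eqToHom h1 ≫
        CommRingCat.ofHom ((Polynomial.aeval (0 : R)).toRingHom : Polynomial R →+* R) ≫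
          eqToHom h0.symm)
    (hd1 : X.δ (1 : Fin 2) =
      eqToHom h1 ≫
        CommRingCat.ofHom ((Polynomial.aeval (1 : R)).toRingHom : Polynomial R →+* R) ≫
          eqToHom h0.symm) :
    Subsingleton ((colimit (X : SimplexCategoryᵒᵖ ⥤ CommRingCat) : CommRingCat)) := by
  have key : X.δ (0 : Fin 2) ≫ colimit.ι (X : SimplexCategoryᵒᵖ ⥤ CommRingCat) (Opposite.op (SimplexCategory.mk 0))
      = X.δ (1 : Fin 2) ≫ colimit.ι (X : SimplexCategoryᵒᵖ ⥤ CommRingCat) (Opposite.op (SimplexCategory.mk 0)) := by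
    simp only [SimplicialObject.δ]
    rw [colimit.w, colimit.w]
  rw [hd0, hd1] at key
  simp only [Category.assoc, cancel_epi] at key
  have key2 := RingHom.congr_fun (congrArg CommRingCat.Hom.hom key) Polynomial.X
  simp at key2
  exact subsingleton_of_zero_eq_one key2
end
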